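/- Let $P$ and $Q$ be orthogonal projections on a Hilbert space with $\|P - Q\| = \delta$, and let $A$ be a nonnegative self-adjoint operator with $A \ge \gamma(\mathbf{1} - P)$ for some $\gamma > 0$. Then $(\mathbf{1}-Q) A (\mathbf{1}-Q) \ge \gamma(1 - 2\delta - \delta^2)(\mathbf{1} - Q)$ as quadratic forms. -/

import Mathlib

/-- A spectral gap above the range of a projection `P` transfers, with controlled loss,
to a nearby projection `Q`: if `‖P - Q‖ = δ` and `A ≥ γ(1-P)` then
`(1-Q)A(1-Q) ≥ γ(1 - 2δ - δ²)(1-Q)` as quadratic forms. -/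
theorem stmt_11 {E : Type*} [NormedAddCommGroup E] [InnerProductSpace ℂ E] [CompleteSpace E]
    (P Q A : E →L[ℂ] E)
    (hP : IsSelfAdjoint P) (hPidem : P ∘L P = P)
    (hQ : IsSelfAdjoint Q) (hQidem : Q ∘L Q = Q)
    (δ : ℝ) (hδ : ‖P - Q‖ = δ)
    (hA : IsSelfAdjoint A) (hApos : ∀ v : E, 0 ≤ (inner ℂ (A v) v : ℂ).re)
    (γ : ℝ) (hγ : 0 < γ)
    (hgap : ∀ v : E, γ * (inner ℂ ((1 - P) v) v : ℂ).re ≤ (inner ℂ (A v) v : ℂ).re) :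
    ∀ v : E, γ * (1 - 2 * δ - δ ^ 2) * (inner ℂ ((1 - Q) v) v : ℂ).re ≤
      (inner ℂ (A ((1 - Q) v)) ((1 - Q) v) : ℂ).re := by
  intro v
  set w : E := (1 - Q) v with hw
  have hδ0 : 0 ≤ δ := hδ ▸ norm_nonneg _
  have hQw : Q w = 0 := by
    have := congrArg (fun T : E →L[ℂ] E => T v) hQidem
    simp only [ContinuousLinearMap.comp_apply] at this
    simp [hw, map_sub, this]
  -- inner ℂ w v = ‖w‖²
  have h1 : (inner ℂ w v : ℂ).re = ‖w‖ ^ 2 := by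
    have hsym : (inner ℂ w (Q v) : ℂ) = inner ℂ (Q w) v := (hQ.isSymmetric w v).symm
    have : (inner ℂ w v : ℂ) = inner ℂ w w + inner ℂ w (Q v) := by
      rw [← inner_add_right]
      congr 1
      simp [hw]
    rw [this, hsym, hQw, inner_zero_left, add_zero]
    simpa using inner_self_eq_norm_sq (𝕜 := ℂ) w
  -- Pw = (P-Q)w
  have hPw : P w = (P - Q) w := by simp [hQw]
  -- re ⟨(1-P)w, w⟩ ≥ (1-δ)‖w‖²
  have h2 : (1 - δ) * ‖w‖ ^ 2 ≤ (inner ℂ ((1 - P) w) w : ℂ).re := by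
    have happ : ((1 : E →L[ℂ] E) - P) w = w - P w := by simp
    have hexp : (inner ℂ ((1 - P) w) w : ℂ) = inner ℂ w w - inner ℂ (P w) w := by
      rw [happ, inner_sub_left]
    have hbound : (inner ℂ (P w) w : ℂ).re ≤ δ * ‖w‖ ^ 2 := by
      calc (inner ℂ (P w) w : ℂ).re ≤ ‖(inner ℂ (P w) w : ℂ)‖ := Complex.re_le_norm _
        _ ≤ ‖P w‖ * ‖w‖ := norm_inner_le_norm _ _
        _ = ‖(P - Q) w‖ * ‖w‖ := by rw [hPw]
        _ ≤ (‖P - Q‖ * ‖w‖) * ‖w‖ := by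
            gcongr; exact (P - Q).le_opNorm w
        _ = δ * ‖w‖ ^ 2 := by rw [hδ]; ring
    have : (inner ℂ ((1 - P) w) w : ℂ).re = ‖w‖ ^ 2 - (inner ℂ (P w) w : ℂ).re := by
      have hww : (inner ℂ w w : ℂ).re = ‖w‖ ^ 2 := by simpa using inner_self_eq_norm_sq (𝕜 := ℂ) w
      rw [hexp, Complex.sub_re, hww]
    rw [this]; nlinarith
  have hgapw := hgap w
  have hq : γ * (1 - 2 * δ - δ ^ 2) * ‖w‖ ^ 2 ≤ γ * ((1 - δ) * ‖w‖ ^ 2) := by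
    have hn : (0:ℝ) ≤ ‖w‖ ^ 2 := sq_nonneg _
    nlinarith [mul_nonneg (mul_nonneg hγ.le hn) hδ0, mul_nonneg (mul_nonneg hγ.le hn) (mul_nonneg hδ0 hδ0)]
  have : γ * (1 - 2 * δ - δ ^ 2) * ‖w‖ ^ 2 ≤ (inner ℂ (A w) w : ℂ).re := by
    calc γ * (1 - 2 * δ - δ ^ 2) * ‖w‖ ^ 2 ≤ γ * ((1 - δ) * ‖w‖ ^ 2) := hq
      _ ≤ γ * (inner ℂ ((1 - P) w) w : ℂ).re := by
          exact mul_le_mul_of_nonneg_left h2 hγ.le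
      _ ≤ (inner ℂ (A w) w : ℂ).re := hgapw
  rw [h1]
  exact this
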